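/- arXiv:2206.12777 — 3 statements merged into one kernel-verified Lean document; each statement's English description precedes it below -/
import Mathlib

section
/- A mixed multigraph M is cospectral with its underlying graph G(M) (i.e., N(M) and N(G(M)) have the same spectrum) if and only if every mixed cycle of M has weight 1. -/
open Complex Finset

noncomputable section

/-- The primitive sixth root of unity `ω = 1/2 + (√3/2)i`. -/
def omega6 : ℂ := ⟨1/2, Real.sqrt 3 / 2⟩

/-- A loopless undirected multigraph with vertex type `V` and edge type `E`:
each edge has a pair of distinct endpoints. -/
structure Multigraph (V E : Type) where
  ends : E → Sym2 V
  loopless : ∀ e, ¬ (ends e).IsDiag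

variable {V E : Type}

/-- A mixed multigraph with underlying multigraph `G`: each edge is either
unoriented (`none`) or oriented (`some (u, v)`, an arc from `u` to `v`),
the orientation is compatible with the endpoints, and there are no digons
(two parallel edges oriented in opposite directions). -/
structure MixedOrientation (G : Multigraph V E) where
  orient : E → Option (V × V)
  compat : ∀ e a b, orient e = some (a, b) → G.ends e = s(a, b)
  noDigon : ∀ e f a b, G.ends e = G.ends f → orient e = some (a, b) → orient f ≠ some (b, a)

/-- The underlying graph of `G`, viewed as the mixed multigraph with no oriented edges. -/
def Multigraph.triv (G : Multigraph V E) : MixedOrientation G where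
  orient := fun _ => none
  compat := fun _ _ _ h => by simp at h
  noDigon := fun _ _ _ _ _ h => by simp at h

variable [DecidableEq V]

/-- The contribution of edge `e`, traversed from `u` to `v`, to the Hermitian adjacency
matrix entry `N_{uv}` and to walk weights: `1` if `e` is unoriented, `ω` if `e` is an arc
from `u` to `v`, and `conj ω` if `e` is an arc from `v` to `u`. -/
def stepWeight {G : Multigraph V E} (M : MixedOrientation G) (e : E) (u v : V) : ℂ :=
  match M.orient e with
  | none => 1
  | some (a, _) => if a = u then omega6 else (starRingEnd ℂ) omega6

/-- The Hermitian adjacency matrix `N(M)` of a mixed multigraph: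
`N_{uv} = e{u,v} + e(u,v)·ω + e(v,u)·conj ω`. -/
def herm [Fintype V] [Fintype E] {G : Multigraph V E} (M : MixedOrientation G) :
    Matrix V V ℂ :=
  Matrix.of fun u v => ∑ e : E, if G.ends e = s(u, v) then stepWeight M e u v else 0

/-- A (mixed) cycle in the multigraph `G`: a cyclic sequence of `n ≥ 2` distinct vertices
joined by `n` distinct edges. -/
structure MixedCycle (G : Multigraph V E) where
  n : ℕ
  two_le : 2 ≤ n
  vert : ZMod n → V
  edge : ZMod n → E
  vert_inj : Function.Injective vert
  edge_inj : Function.Injective edge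
  ends_eq : ∀ i, G.ends (edge i) = s(vert i, vert (i + 1))

/-- The weight `wt(C) = ω^f · (conj ω)^b` of a mixed cycle `C` in `M`, traversed in
the direction given by its parametrization. -/
def cycleWeight {G : Multigraph V E} (M : MixedOrientation G) (C : MixedCycle G) : ℂ :=
  haveI : NeZero C.n := ⟨by have := C.two_le; omega⟩
  ∏ i : ZMod C.n, stepWeight M (C.edge i) (C.vert i) (C.vert (i + 1))

/-- The value `ν(C) = wt(C) + conj (wt(C))` of a mixed cycle. -/
def nu {G : Multigraph V E} (M : MixedOrientation G) (C : MixedCycle G) : ℂ :=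
  cycleWeight M C + (starRingEnd ℂ) (cycleWeight M C)

/-- The number of forward arcs of a mixed cycle (relative to its direction). -/
def fCount {G : Multigraph V E} (M : MixedOrientation G) (C : MixedCycle G) : ℕ :=
  haveI : NeZero C.n := ⟨by have := C.two_le; omega⟩
  (Finset.univ.filter fun i : ZMod C.n =>
    M.orient (C.edge i) = some (C.vert i, C.vert (i + 1))).card

/-- The number of backward arcs of a mixed cycle (relative to its direction). -/
def bCount {G : Multigraph V E} (M : MixedOrientation G) (C : MixedCycle G) : ℕ :=
  haveI : NeZero C.n := ⟨by have := C.two_le; omega⟩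
  (Finset.univ.filter fun i : ZMod C.n =>
    M.orient (C.edge i) = some (C.vert (i + 1), C.vert i)).card

/-- The edge set of a mixed cycle. -/
def cycleEdges [DecidableEq E] {G : Multigraph V E} (C : MixedCycle G) : Finset E :=
  haveI : NeZero C.n := ⟨by have := C.two_le; omega⟩
  Finset.image C.edge Finset.univ

/-- Reachability in `G` using only edges from the set `S`. -/
def ReachIn (G : Multigraph V E) (S : Set E) (u v : V) : Prop :=
  Relation.ReflTransGen (fun x y => ∃ e ∈ S, G.ends e = s(x, y)) u v

/-- A multigraph is connected if every two vertices are joined by a walk. -/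
def Multigraph.Connected (G : Multigraph V E) : Prop :=
  ∀ u v : V, ReachIn G Set.univ u v

/-- All entries of the diagonal `d` are sixth roots of unity `ω^i`, `0 ≤ i ≤ 5`. -/
def IsSixthRoots (d : V → ℂ) : Prop := ∀ v, ∃ i : ℕ, i ≤ 5 ∧ d v = omega6 ^ i

/-- `M''` is obtained from `M'` by a three-way switching: `N(M'') = D⁻¹ N(M') D` for
some diagonal matrix `D` whose diagonal entries are sixth roots of unity. -/
def Switching [Fintype V] [Fintype E] {G : Multigraph V E}
    (M' M'' : MixedOrientation G) : Prop :=
  ∃ d : V → ℂ, IsSixthRoots d ∧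
    herm M'' = (Matrix.diagonal d)⁻¹ * herm M' * Matrix.diagonal d

/-- `M'` is the converse of `M`: every arc of `M` is reversed. -/
def IsConverse {G : Multigraph V E} (M M' : MixedOrientation G) : Prop :=
  ∀ e, M'.orient e = Option.map Prod.swap (M.orient e)

/-- `M'` and `M''` are switching equivalent: one is obtained from the other by a
three-way switching and/or taking a converse. -/
def SwitchEquiv [Fintype V] [Fintype E] {G : Multigraph V E}
    (M' M'' : MixedOrientation G) : Prop :=
  Switching M' M'' ∨ ∃ Mc : MixedOrientation G, IsConverse M' Mc ∧ Switching Mc M''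

/-- `T` is (the edge set of) a spanning tree of `G`: it connects all vertices and
contains no cycle. -/
def IsSpanningTree (G : Multigraph V E) (T : Set E) : Prop :=
  (∀ u v : V, ReachIn G T u v) ∧ ∀ C : MixedCycle G, ¬ (∀ i, C.edge i ∈ T)

/-- `C` is a fundamental cycle with respect to the spanning tree `T`: it uses exactly
one non-tree edge. -/
def IsFundamentalCycle (G : Multigraph V E) (T : Set E) (C : MixedCycle G) : Prop :=
  ∃ e, e ∉ T ∧ ∀ i, C.edge i = e ∨ C.edge i ∈ T

/-! ### Auxiliary machinery for the proof -/

section Aux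

open Polynomial in
lemma normSq_omega6 : Complex.normSq omega6 = 1 := by
  have h3 : Real.sqrt 3 * Real.sqrt 3 = 3 := Real.mul_self_sqrt (by norm_num)
  rw [Complex.normSq_apply]
  show (1/2 : ℝ) * (1/2) + Real.sqrt 3 / 2 * (Real.sqrt 3 / 2) = 1
  linear_combination h3 / 4

variable {V E : Type} [DecidableEq V] {G : Multigraph V E}

/-- The step weight, which in fact does not depend on the second endpoint. -/
def stepW (M : MixedOrientation G) (e : E) (u : V) : ℂ := stepWeight M e u u

lemma stepWeight_eq_stepW (M : MixedOrientation G) (e : E) (u v : V) :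
    stepWeight M e u v = stepW M e u := rfl

lemma normSq_stepW (M : MixedOrientation G) (e : E) (u : V) :
    Complex.normSq (stepW M e u) = 1 := by
  unfold stepW stepWeight
  cases h : M.orient e with
  | none => simp
  | some ab =>
    obtain ⟨a, b⟩ := ab
    dsimp only
    split_ifs <;> simp [normSq_omega6, Complex.normSq_conj]

lemma stepW_triv (e : E) (u : V) : stepW (G.triv) e u = 1 := rfl

lemma ends_ne {e : E} {u v : V} (h : G.ends e = s(u, v)) : u ≠ v := by
  intro huv
  exact G.loopless e (by rw [h, huv]; exact Sym2.mk_isDiag_iff.mpr rfl)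

lemma stepW_rev (M : MixedOrientation G) {e : E} {u v : V}
    (h : G.ends e = s(u, v)) (hne : u ≠ v) :
    stepW M e v = (starRingEnd ℂ) (stepW M e u) := by
  unfold stepW stepWeight
  cases horient : M.orient e with
  | none => simp
  | some ab =>
    obtain ⟨a, b⟩ := ab
    dsimp only
    have hab := M.compat e a b horient
    rcases Sym2.eq_iff.mp (h.symm.trans hab) with ⟨h1, h2⟩ | ⟨h1, h2⟩
    · subst h1
      rw [if_neg hne, if_pos rfl]
    · rw [if_pos h2.symm, if_neg (fun hau => hne (h2.trans hau).symm), Complex.conj_conj]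

lemma stepW_mul_rev (M : MixedOrientation G) {e : E} {u v : V}
    (h : G.ends e = s(u, v)) (hne : u ≠ v) :
    stepW M e u * stepW M e v = 1 := by
  rw [stepW_rev M h hne, Complex.mul_conj, normSq_stepW, Complex.ofReal_one]

lemma eq_one_of_normSq_re {z : ℂ} (h1 : Complex.normSq z = 1) (h2 : z.re = 1) : z = 1 := by
  have h3 : z.re * z.re + z.im * z.im = 1 := by rw [← Complex.normSq_apply, h1]
  have him : z.im = 0 := by nlinarith
  exact Complex.ext (by simpa using h2) (by simpa using him)

lemma re_le_one_of_normSq {z : ℂ} (h1 : Complex.normSq z = 1) : z.re ≤ 1 := by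
  have h3 : z.re * z.re + z.im * z.im = 1 := by rw [← Complex.normSq_apply, h1]
  nlinarith [sq_nonneg (z.re - 1), mul_self_nonneg z.im]

/-! #### Products over `ZMod n` -/

lemma prod_zmod {n : ℕ} [NeZero n] (f : ZMod n → ℂ) :
    ∏ i : ZMod n, f i = ∏ t ∈ Finset.range n, f ((t : ℕ) : ZMod n) := by
  rw [← Fin.prod_univ_eq_prod_range (fun t : ℕ => f ((t : ℕ) : ZMod n)) n]
  refine (Fintype.prod_bijective (fun t : Fin n => ((t : ℕ) : ZMod n)) ?_ _ _ fun t => rfl).symm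
  constructor
  · intro x y hxy
    have h := congrArg ZMod.val hxy
    rw [ZMod.val_cast_of_lt x.isLt, ZMod.val_cast_of_lt y.isLt] at h
    exact Fin.ext h
  · intro i
    exact ⟨⟨i.val, ZMod.val_lt i⟩, ZMod.natCast_rightInverse i⟩

lemma cycleWeight_eq_prod (M : MixedOrientation G) (C : MixedCycle G) :
    cycleWeight M C
      = ∏ t ∈ Finset.range C.n, stepW M (C.edge ((t : ℕ) : ZMod C.n)) (C.vert ((t : ℕ) : ZMod C.n)) := by
  haveI : NeZero C.n := ⟨by have := C.two_le; omega⟩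
  show (∏ i : ZMod C.n, stepWeight M (C.edge i) (C.vert i) (C.vert (i + 1))) = _
  simp only [stepWeight_eq_stepW]
  exact prod_zmod _

/-! #### Closed walks indexed by `ℕ` -/

/-- The weight of the length-`n` walk with vertices `p` and edges `e`. -/
def nwt (M : MixedOrientation G) (p : ℕ → V) (e : ℕ → E) (n : ℕ) : ℂ :=
  ∏ i ∈ Finset.range n, stepW M (e i) (p i)

/-- The key combinatorial lemma: if every cycle has weight one, then every closed
walk has weight one. -/
lemma nwt_eq_one (M : MixedOrientation G) (H : ∀ C : MixedCycle G, cycleWeight M C = 1) :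
    ∀ (n : ℕ) (p : ℕ → V) (e : ℕ → E), p n = p 0 →
      (∀ i < n, G.ends (e i) = s(p i, p (i+1))) → nwt M p e n = 1 := by
  intro n
  induction n using Nat.strong_induction_on with
  | _ n IH =>
  intro p e hclose hends
  by_cases hrep : ∃ i j, i < j ∧ j < n ∧ p i = p j
  · obtain ⟨i, j, hij, hjn, hpij⟩ := hrep
    set d := j - i with hd
    have hd0 : 0 < d := by omega
    -- the spliced-out closed subwalk
    have h1 : (∏ t ∈ Finset.range d, stepW M (e (i + t)) (p (i + t))) = 1 := by
      refine IH d (by omega) (fun t => p (i + t)) (fun t => e (i + t)) ?_ ?_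
      · show p (i + d) = p (i + 0)
        rw [show i + d = j from by omega, Nat.add_zero]
        exact hpij.symm
      · intro t ht
        show G.ends (e (i + t)) = s(p (i + t), p (i + (t + 1)))
        rw [show i + (t + 1) = (i + t) + 1 from by omega]
        exact hends (i + t) (by omega)
    -- the remaining closed walk
    have h2' : nwt M (fun t => if t < i then p t else p (t + d))
        (fun t => if t < i then e t else e (t + d)) (n - d)
        = (∏ t ∈ Finset.range i, stepW M (e t) (p t)) *
          (∏ t ∈ Finset.range (n - j), stepW M (e (j + t)) (p (j + t))) := by
      unfold nwt
      conv_lhs => rw [show n - d = i + (n - j) from by omega, Finset.prod_range_add]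
      congr 1
      · refine Finset.prod_congr rfl fun t ht => ?_
        have htl := Finset.mem_range.mp ht
        dsimp only
        rw [if_pos htl, if_pos htl]
      · refine Finset.prod_congr rfl fun t ht => ?_
        have htl := Finset.mem_range.mp ht
        dsimp only
        rw [if_neg (by omega), if_neg (by omega), show i + t + d = j + t from by omega]
    have h2 : (∏ t ∈ Finset.range i, stepW M (e t) (p t)) *
        (∏ t ∈ Finset.range (n - j), stepW M (e (j + t)) (p (j + t))) = 1 := by
      rw [← h2']
      refine IH (n - d) (by omega) _ _ ?_ ?_
      · show (if n - d < i then p (n - d) else p (n - d + d)) = (if 0 < i then p 0 else p (0 + d))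
        rw [if_neg (by omega), show n - d + d = n from by omega]
        rcases Nat.eq_zero_or_pos i with hi0 | hip
        · rw [if_neg (by omega), show 0 + d = j from by omega, hclose]
          rw [show (0 : ℕ) = i from hi0.symm]
          exact hpij
        · rw [if_pos hip]; exact hclose
      · intro t ht
        by_cases hti : t + 1 < i
        · simp only [if_pos (show t < i by omega), if_pos hti]
          exact hends t (by omega)
        · by_cases hti' : t < i
          · have hte : t + 1 = i := by omega
            simp only [if_pos hti', if_neg (show ¬ t + 1 < i by omega)]
            rw [show t + 1 + d = j from by omega, ← hpij, ← hte]
            exact hends t (by omega)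
          · simp only [if_neg hti', if_neg (show ¬ t + 1 < i by omega)]
            rw [show t + 1 + d = (t + d) + 1 from by omega]
            exact hends (t + d) (by omega)
    have key : nwt M p e n =
        ((∏ t ∈ Finset.range i, stepW M (e t) (p t)) *
         (∏ t ∈ Finset.range d, stepW M (e (i + t)) (p (i + t)))) *
        (∏ t ∈ Finset.range (n - j), stepW M (e (j + t)) (p (j + t))) := by
      unfold nwt
      conv_lhs => rw [show n = j + (n - j) from by omega, Finset.prod_range_add]
      congr 1
      conv_lhs => rw [show j = i + d from by omega, Finset.prod_range_add]
    rw [key, h1, mul_one]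
    exact h2
  · push_neg at hrep
    rcases Nat.lt_or_ge n 2 with hn2 | hn2
    · interval_cases n
      · simp [nwt]
      · exact absurd (hclose.symm) (ends_ne (hends 0 (by omega)))
    by_cases herep : ∃ a b, a < b ∧ b < n ∧ e a = e b
    · obtain ⟨a, b, hab, hbn, heab⟩ := herep
      have hA := hends a (by omega)
      have hB := hends b (by omega)
      rw [heab] at hA
      rcases Sym2.eq_iff.mp (hA.symm.trans hB) with ⟨h1', _⟩ | ⟨h1', h2'⟩
      · exact absurd h1' (hrep a b hab hbn)
      · have hb1 : b + 1 = n := by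
          by_contra hbn'
          exact hrep a (b+1) (by omega) (by omega) h1'
        have ha0 : a = 0 := by
          by_contra ha'
          refine hrep 0 a (by omega) (by omega) ?_
          rw [← hclose, ← hb1]
          exact h1'.symm
        have hbv : b = 1 := by
          by_contra hb'
          refine hrep 1 b (by omega) (by omega) ?_
          rw [show (1:ℕ) = a + 1 from by omega]
          exact h2'
        have hnn : n = 2 := by omega
        have h10 : e 1 = e 0 := by
          rw [ha0, hbv] at heab
          exact heab.symm
        unfold nwt
        rw [hnn, Finset.prod_range_succ, Finset.prod_range_succ, Finset.prod_range_zero, one_mul,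
          h10]
        exact stepW_mul_rev M (hends 0 (by omega)) (ends_ne (hends 0 (by omega)))
    · push_neg at herep
      haveI : NeZero n := ⟨by omega⟩
      have hvi : ∀ x y : ZMod n, p x.val = p y.val → x = y := by
        intro x y hxy
        rcases lt_trichotomy x.val y.val with hlt | heq | hgt
        · exact absurd hxy (hrep _ _ hlt (ZMod.val_lt y))
        · exact ZMod.val_injective n heq
        · exact absurd hxy.symm (hrep _ _ hgt (ZMod.val_lt x))
      have hei : ∀ x y : ZMod n, e x.val = e y.val → x = y := by
        intro x y hxy
        rcases lt_trichotomy x.val y.val with hlt | heq | hgt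
        · exact absurd hxy (herep _ _ hlt (ZMod.val_lt y))
        · exact ZMod.val_injective n heq
        · exact absurd hxy.symm (herep _ _ hgt (ZMod.val_lt x))
      have hsucc : ∀ x : ZMod n, p ((x + 1 : ZMod n)).val = p (x.val + 1) := by
        intro x
        have h1 : ((x + 1 : ZMod n)).val = (x.val + 1) % n := by
          have hc : (x + 1 : ZMod n) = ((x.val + 1 : ℕ) : ZMod n) := by
            rw [Nat.cast_add, Nat.cast_one, ZMod.natCast_rightInverse x]
          rw [hc, ZMod.val_natCast]
        rcases Nat.lt_or_ge (x.val + 1) n with hlt | hge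
        · rw [h1, Nat.mod_eq_of_lt hlt]
        · have hxn : x.val + 1 = n := by have := ZMod.val_lt x; omega
          rw [h1, hxn, Nat.mod_self]
          exact hclose.symm
      let C : MixedCycle G :=
        { n := n, two_le := hn2,
          vert := fun x => p x.val,
          edge := fun x => e x.val,
          vert_inj := fun x y h => hvi x y h,
          edge_inj := fun x y h => hei x y h,
          ends_eq := fun x => by
            show G.ends (e x.val) = s(p x.val, p ((x + 1 : ZMod n)).val)
            rw [hsucc x]
            exact hends x.val (ZMod.val_lt x) }
      have hcw : cycleWeight M C = nwt M p e n := by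
        rw [cycleWeight_eq_prod]
        unfold nwt
        refine Finset.prod_congr rfl fun t ht => ?_
        have hv : ((t : ZMod n)).val = t := ZMod.val_cast_of_lt (Finset.mem_range.mp ht)
        show stepW M (e ((t : ZMod n)).val) (p ((t : ZMod n)).val) = stepW M (e t) (p t)
        rw [hv]
      rw [← hcw]
      exact H C

end Aux
section Aux2

variable {V E : Type} [DecidableEq V] {G : Multigraph V E}

/-! #### Walk weights between two vertices -/

/-- `WWt M u v c` means that there is a walk from `u` to `v` of weight `c`. -/
def WWt (M : MixedOrientation G) (u v : V) (c : ℂ) : Prop :=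
  ∃ (n : ℕ) (p : ℕ → V) (e : Fin n → E), p 0 = u ∧ p n = v ∧
    (∀ i : Fin n, G.ends (e i) = s(p i.val, p (i.val + 1))) ∧
    c = ∏ i : Fin n, stepW M (e i) (p i.val)

lemma WWt.refl (M : MixedOrientation G) (u : V) : WWt M u u 1 :=
  ⟨0, fun _ => u, Fin.elim0, rfl, rfl, fun i => i.elim0, by simp⟩

lemma WWt.single (M : MixedOrientation G) {e : E} {u v : V} (h : G.ends e = s(u, v)) :
    WWt M u v (stepW M e u) := by
  refine ⟨1, fun t => if t = 0 then u else v, fun _ => e, by simp, by simp, ?_, ?_⟩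
  · intro i
    have h0 : i.val = 0 := by omega
    rw [h0]
    simpa using h
  · rw [Fin.prod_univ_one]
    simp

lemma WWt.normSq {M : MixedOrientation G} {u v : V} {c : ℂ}
    (h : WWt M u v c) : Complex.normSq c = 1 := by
  obtain ⟨n, p, e, -, -, -, hc⟩ := h
  rw [hc, map_prod]
  exact Finset.prod_eq_one fun i _ => normSq_stepW M _ _

lemma WWt.ne_zero {M : MixedOrientation G} {u v : V} {c : ℂ}
    (h : WWt M u v c) : c ≠ 0 := by
  intro h0
  have h1 := h.normSq
  rw [h0, map_zero] at h1
  norm_num at h1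

lemma WWt.trans {M : MixedOrientation G} {u v w : V} {c c' : ℂ}
    (h : WWt M u v c) (h' : WWt M v w c') : WWt M u w (c * c') := by
  obtain ⟨n1, p1, e1, h10, h1n, h1e, h1c⟩ := h
  obtain ⟨n2, p2, e2, h20, h2n, h2e, h2c⟩ := h'
  refine ⟨n1 + n2, fun t => if t < n1 then p1 t else p2 (t - n1),
    fun i => if h : i.val < n1 then e1 ⟨i.val, h⟩ else e2 ⟨i.val - n1, by
      have := i.isLt; omega⟩, ?_, ?_, ?_, ?_⟩
  · dsimp only
    rcases Nat.eq_zero_or_pos n1 with h0 | h0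
    · rw [if_neg (by omega)]
      rw [show (0 : ℕ) - n1 = 0 from by omega, h20]
      rw [← h1n, h0]
      exact h10
    · rw [if_pos h0]; exact h10
  · dsimp only
    rw [if_neg (by omega), show n1 + n2 - n1 = n2 from by omega]
    exact h2n
  · intro i
    have hin := i.isLt
    dsimp only
    by_cases hi : i.val < n1
    · rw [dif_pos hi, if_pos hi]
      have hh := h1e ⟨i.val, hi⟩
      by_cases hi1 : i.val + 1 < n1
      · rw [if_pos hi1]; exact hh
      · have hieq : i.val + 1 = n1 := by omega
        rw [if_neg (by omega), show i.val + 1 - n1 = 0 from by omega, h20, ← h1n]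
        rw [show p1 n1 = p1 (i.val + 1) from by rw [hieq]]
        exact hh
    · rw [dif_neg hi, if_neg hi, if_neg (by omega)]
      rw [show i.val + 1 - n1 = (i.val - n1) + 1 from by omega]
      exact h2e ⟨i.val - n1, by omega⟩
  · rw [h1c, h2c, Fin.prod_univ_add]
    congr 1
    · refine Finset.prod_congr rfl fun i _ => ?_
      have hlt : (Fin.castAdd n2 i).val < n1 := by
        rw [Fin.coe_castAdd]; exact i.isLt
      dsimp only
      rw [dif_pos hlt, if_pos hlt]
      rfl
    · refine Finset.prod_congr rfl fun i _ => ?_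
      have hge : ¬ (Fin.natAdd n1 i).val < n1 := by
        rw [Fin.coe_natAdd]; omega
      dsimp only
      rw [dif_neg hge, if_neg hge]
      refine congrArg₂ (stepW M) ?_ ?_
      · exact congrArg e2 (Fin.ext (show (i : ℕ) = (Fin.natAdd n1 i).val - n1 by
          rw [Fin.coe_natAdd]; omega))
      · exact congrArg p2 (show (i : ℕ) = (Fin.natAdd n1 i).val - n1 by
          rw [Fin.coe_natAdd]; omega)

lemma WWt.symm {M : MixedOrientation G} {u v : V} {c : ℂ}
    (h : WWt M u v c) : WWt M v u ((starRingEnd ℂ) c) := by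
  obtain ⟨n, p, e, h0, hn, he, hc⟩ := h
  refine ⟨n, fun t => p (n - t), fun i => e (Fin.rev i), ?_, ?_, ?_, ?_⟩
  · simpa using hn
  · simpa using h0
  · intro i
    have hin := i.isLt
    dsimp only
    have hh := he (Fin.rev i)
    rw [Fin.val_rev] at hh
    rw [show n - ((i : ℕ) + 1) + 1 = n - (i : ℕ) from by omega] at hh
    rw [hh]
    exact Sym2.eq_swap
  · rw [hc, map_prod]
    calc (∏ i : Fin n, (starRingEnd ℂ) (stepW M (e i) (p i.val)))
        = ∏ i : Fin n, stepW M (e i) (p (i.val + 1)) :=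
          Finset.prod_congr rfl fun i _ => (stepW_rev M (he i) (ends_ne (he i))).symm
      _ = ∏ i : Fin n, stepW M (e (Fin.rev i)) (p (n - i.val)) := by
          rw [← Equiv.prod_comp Fin.revPerm (fun i : Fin n =>
            stepW M (e (Fin.rev i)) (p (n - i.val)))]
          refine Finset.prod_congr rfl fun j _ => ?_
          refine congrArg₂ (stepW M) ?_ ?_
          · exact congrArg e (by rw [Fin.revPerm_apply, Fin.rev_rev])
          · exact congrArg p (by
              have := j.isLt
              rw [Fin.revPerm_apply, Fin.val_rev]
              omega)

lemma WWt.closed {M : MixedOrientation G} (H : ∀ C : MixedCycle G, cycleWeight M C = 1)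
    {u : V} {c : ℂ} (h : WWt M u u c) : c = 1 := by
  obtain ⟨n, p, e, h0, hn, he, hc⟩ := h
  rcases Nat.eq_zero_or_pos n with rfl | hn0
  · rw [hc]; simp
  · have hbridge : c = nwt M p (fun t => if ht : t < n then e ⟨t, ht⟩ else e ⟨0, hn0⟩) n := by
      rw [hc]
      unfold nwt
      rw [← Fin.prod_univ_eq_prod_range
        (fun t => stepW M (if ht : t < n then e ⟨t, ht⟩ else e ⟨0, hn0⟩) (p t)) n]
      refine Finset.prod_congr rfl fun i _ => ?_
      rw [dif_pos i.isLt]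
    rw [hbridge]
    exact nwt_eq_one M H n p _ (hn.trans h0.symm)
      (fun i hi => by rw [dif_pos hi]; exact he ⟨i, hi⟩)

lemma WWt.unique {M : MixedOrientation G} (H : ∀ C : MixedCycle G, cycleWeight M C = 1)
    {u v : V} {c c' : ℂ} (h : WWt M u v c) (h' : WWt M u v c') : c = c' := by
  have h1 : c * (starRingEnd ℂ) c' = 1 := WWt.closed H (h.trans h'.symm)
  have h2 : (starRingEnd ℂ) c' * c' = 1 := by
    rw [mul_comm, Complex.mul_conj, h'.normSq, Complex.ofReal_one]
  calc c = c * ((starRingEnd ℂ) c' * c') := by rw [h2, mul_one]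
    _ = (c * (starRingEnd ℂ) c') * c' := by ring
    _ = c' := by rw [h1, one_mul]

lemma exists_potential (M : MixedOrientation G) (H : ∀ C : MixedCycle G, cycleWeight M C = 1) :
    ∃ d : V → ℂ, (∀ v, d v ≠ 0) ∧
      ∀ (e : E) (u v : V), G.ends e = s(u, v) → stepW M e u = (d u)⁻¹ * d v := by
  classical
  letI s : Setoid V := ⟨fun u v => ∃ c, WWt M u v c,
    ⟨fun u => ⟨1, WWt.refl M u⟩,
     fun ⟨c, hc⟩ => ⟨_, hc.symm⟩,
     fun ⟨c, hc⟩ ⟨c', hc'⟩ => ⟨_, hc.trans hc'⟩⟩⟩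
  have hex : ∀ v : V, ∃ c, WWt M (Quotient.out (Quotient.mk s v)) v c := fun v =>
    Quotient.mk_out v
  refine ⟨fun v => (hex v).choose, fun v => (hex v).choose_spec.ne_zero, ?_⟩
  intro e u v huv
  have hr : (Quotient.mk s u) = (Quotient.mk s v) :=
    Quotient.sound ⟨_, WWt.single M huv⟩
  have h1 : WWt M (Quotient.out (Quotient.mk s u)) v ((hex u).choose * stepW M e u) :=
    (hex u).choose_spec.trans (WWt.single M huv)
  have h2 : WWt M (Quotient.out (Quotient.mk s u)) v ((hex v).choose) := by
    rw [hr]; exact (hex v).choose_spec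
  have h3 := WWt.unique H h1 h2
  show stepW M e u = ((hex u).choose)⁻¹ * (hex v).choose
  rw [← h3, ← mul_assoc, inv_mul_cancel₀ (hex u).choose_spec.ne_zero, one_mul]

end Aux2
section Aux3

open Polynomial

variable {V E : Type} [DecidableEq V] {G : Multigraph V E} [Fintype V] [Fintype E]

lemma prod_ite_all {ι : Type} [Fintype ι] (P : ι → Prop) [DecidablePred P]
    [Decidable (∀ i, P i)] (f : ι → ℂ) :
    (∏ i, if P i then f i else 0) = if (∀ i, P i) then ∏ i, f i else 0 := by
  by_cases h : ∀ i, P i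
  · rw [if_pos h]
    exact Finset.prod_congr rfl fun i _ => if_pos (h i)
  · rw [if_neg h]
    push_neg at h
    obtain ⟨i, hi⟩ := h
    exact Finset.prod_eq_zero (Finset.mem_univ i) (if_neg hi)

lemma pow_apply_walk (A : Matrix V V ℂ) :
    ∀ (k : ℕ) (u w : V), (A ^ k) u w =
      ∑ p : Fin (k+1) → V,
        if p 0 = u ∧ p (Fin.last k) = w
        then ∏ i : Fin k, A (p i.castSucc) (p i.succ) else 0 := by
  intro k
  induction k with
  | zero =>
    intro u w
    rw [pow_zero, Matrix.one_apply]
    rw [Fintype.sum_equiv (Equiv.funUnique (Fin 1) V) _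
      (fun x : V => if x = u ∧ x = w then (1:ℂ) else 0) (fun p => by
        have h1 : Fin.last 0 = (0 : Fin 1) := by decide
        have h2 : (Equiv.funUnique (Fin 1) V) p = p 0 := by
          show p default = p 0
          rw [show (default : Fin 1) = 0 from by decide]
        rw [h1, h2]
        simp)]
    rcases eq_or_ne u w with rfl | hne
    · rw [if_pos rfl]
      symm
      rw [Finset.sum_congr rfl fun x (_ : x ∈ Finset.univ) =>
        (show (if x = u ∧ x = u then (1:ℂ) else 0) = if x = u then 1 else 0 by
          by_cases h : x = u
          · rw [if_pos ⟨h, h⟩, if_pos h]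
          · rw [if_neg (fun hc => h hc.1), if_neg h])]
      exact Fintype.sum_ite_eq' u fun _ => (1:ℂ)
    · rw [if_neg hne]
      symm
      exact Finset.sum_eq_zero fun x _ => if_neg (by rintro ⟨rfl, rfl⟩; exact hne rfl)
  | succ k IH =>
    intro u w
    rw [pow_succ', Matrix.mul_apply]
    have hPi : ∀ (x : V) (q : Fin (k+1) → V),
        (∏ i : Fin (k+1), A ((Fin.cons x q : Fin (k+2) → V) i.castSucc)
            ((Fin.cons x q : Fin (k+2) → V) i.succ))
          = A x (q 0) * ∏ i : Fin k, A (q i.castSucc) (q i.succ) := by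
      intro x q
      rw [Fin.prod_univ_succ]
      rfl
    calc (∑ x : V, A u x * (A ^ k) x w)
        = ∑ x : V, ∑ q : Fin (k+1) → V,
            if q 0 = x then (if q (Fin.last k) = w
              then A u x * ∏ i : Fin k, A (q i.castSucc) (q i.succ) else 0) else 0 := by
          refine Finset.sum_congr rfl fun x _ => ?_
          rw [IH x w, Finset.mul_sum]
          refine Finset.sum_congr rfl fun q _ => ?_
          rw [mul_ite, mul_zero, ite_and]
      _ = ∑ q : Fin (k+1) → V, (if q (Fin.last k) = w
              then A u (q 0) * ∏ i : Fin k, A (q i.castSucc) (q i.succ) else 0) := by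
          rw [Finset.sum_comm]
          refine Finset.sum_congr rfl fun q _ => ?_
          exact Fintype.sum_ite_eq (q 0) _
      _ = ∑ x : V, ∑ q : Fin (k+1) → V,
            if x = u then (if q (Fin.last k) = w
              then A x (q 0) * ∏ i : Fin k, A (q i.castSucc) (q i.succ) else 0) else 0 := by
          symm
          rw [Finset.sum_comm]
          refine Finset.sum_congr rfl fun q _ => ?_
          exact Fintype.sum_ite_eq' u _
      _ = ∑ p : Fin (k+2) → V,
            if p 0 = u ∧ p (Fin.last (k+1)) = w
            then ∏ i : Fin (k+1), A (p i.castSucc) (p i.succ) else 0 := by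
          rw [← Equiv.sum_comp (Fin.consEquiv (fun _ : Fin (k+2) => V))
            (fun p : Fin (k+2) → V => if p 0 = u ∧ p (Fin.last (k+1)) = w
              then ∏ i : Fin (k+1), A (p i.castSucc) (p i.succ) else 0), Fintype.sum_prod_type]
          refine Finset.sum_congr rfl fun x _ => ?_
          refine Finset.sum_congr rfl fun q _ => ?_
          show _ = (if (Fin.cons x q : Fin (k+2) → V) 0 = u ∧
                (Fin.cons x q : Fin (k+2) → V) (Fin.last (k+1)) = w
              then ∏ i : Fin (k+1), A ((Fin.cons x q : Fin (k+2) → V) i.castSucc)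
                ((Fin.cons x q : Fin (k+2) → V) i.succ) else 0)
          rw [hPi, Fin.cons_zero,
            show Fin.last (k+1) = (Fin.last k).succ from Fin.ext (by simp),
            Fin.cons_succ, ite_and]

lemma trace_pow_walk (A : Matrix V V ℂ) (k : ℕ) :
    (A ^ k).trace = ∑ p : Fin (k+1) → V,
      if p (Fin.last k) = p 0 then ∏ i : Fin k, A (p i.castSucc) (p i.succ) else 0 := by
  rw [Matrix.trace]
  calc (∑ u : V, (A ^ k).diag u)
      = ∑ u : V, ∑ p : Fin (k+1) → V, if p 0 = u then
          (if p (Fin.last k) = u then ∏ i : Fin k, A (p i.castSucc) (p i.succ) else 0) else 0 := by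
        refine Finset.sum_congr rfl fun u _ => ?_
        rw [Matrix.diag_apply, pow_apply_walk A k u u]
        refine Finset.sum_congr rfl fun p _ => ?_
        rw [ite_and]
    _ = ∑ p : Fin (k+1) → V, if p (Fin.last k) = p 0
          then ∏ i : Fin k, A (p i.castSucc) (p i.succ) else 0 := by
        rw [Finset.sum_comm]
        refine Finset.sum_congr rfl fun p _ => ?_
        exact Fintype.sum_ite_eq (p 0) _

lemma herm_apply (M : MixedOrientation G) (u v : V) :
    herm M u v = ∑ e : E, if G.ends e = s(u, v) then stepW M e u else 0 := rfl

lemma trace_herm_pow (M : MixedOrientation G) (k : ℕ) :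
    (herm M ^ k).trace = ∑ p : Fin (k+1) → V, ∑ e : Fin k → E,
      if (p (Fin.last k) = p 0 ∧ ∀ i : Fin k, G.ends (e i) = s(p i.castSucc, p i.succ))
      then ∏ i : Fin k, stepW M (e i) (p i.castSucc) else 0 := by
  rw [trace_pow_walk]
  refine Finset.sum_congr rfl fun p _ => ?_
  have hexp : (∏ i : Fin k, (herm M) (p i.castSucc) (p i.succ))
      = ∑ e : Fin k → E, if (∀ i : Fin k, G.ends (e i) = s(p i.castSucc, p i.succ))
          then ∏ i : Fin k, stepW M (e i) (p i.castSucc) else 0 := by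
    rw [Finset.prod_congr rfl fun i (_ : i ∈ Finset.univ) => herm_apply M (p i.castSucc) (p i.succ)]
    rw [Finset.prod_univ_sum]
    rw [Fintype.piFinset_univ]
    exact Finset.sum_congr rfl fun e _ => prod_ite_all _ _
  by_cases h1 : p (Fin.last k) = p 0
  · rw [if_pos h1, hexp]
    refine Finset.sum_congr rfl fun e _ => ?_
    by_cases h2 : ∀ i : Fin k, G.ends (e i) = s(p i.castSucc, p i.succ)
    · rw [if_pos h2, if_pos ⟨h1, h2⟩]
    · rw [if_neg h2, if_neg (fun hc => h2 hc.2)]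
  · rw [if_neg h1]
    symm
    exact Finset.sum_eq_zero fun e _ => if_neg (fun hc => h1 hc.1)

lemma isHermitian_herm (M : MixedOrientation G) : (herm M).IsHermitian := by
  show (herm M).conjTranspose = herm M
  ext u v
  rw [Matrix.conjTranspose_apply]
  show (starRingEnd ℂ) (herm M v u) = herm M u v
  rw [herm_apply, herm_apply, map_sum]
  refine Finset.sum_congr rfl fun e _ => ?_
  rw [apply_ite (starRingEnd ℂ), map_zero, show s(v, u) = s(u, v) from Sym2.eq_swap]
  by_cases h : G.ends e = s(u, v)
  · rw [if_pos h, if_pos h, stepW_rev M h (ends_ne h), Complex.conj_conj]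
  · rw [if_neg h, if_neg h]

lemma charpoly_conj {P A Q : Matrix V V ℂ} (h1 : P * Q = 1) (h2 : Q * P = 1) :
    (P * A * Q).charpoly = A.charpoly := by
  have hcomm : ∀ B : Matrix V V ℂ[X],
      B * Matrix.scalar V (X : ℂ[X]) = Matrix.scalar V (X : ℂ[X]) * B := fun B =>
    (Matrix.scalar_commute (X : ℂ[X]) (fun r' => Commute.all _ _) B).symm
  have key : Matrix.charmatrix (P * A * Q)
      = (Polynomial.C (R := ℂ)).mapMatrix P * Matrix.charmatrix A * (Polynomial.C (R := ℂ)).mapMatrix Q := by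
    show Matrix.scalar V (X : ℂ[X]) - (Polynomial.C (R := ℂ)).mapMatrix (P * A * Q)
      = (Polynomial.C (R := ℂ)).mapMatrix P *
        (Matrix.scalar V (X : ℂ[X]) - (Polynomial.C (R := ℂ)).mapMatrix A) *
        (Polynomial.C (R := ℂ)).mapMatrix Q
    rw [map_mul, map_mul, mul_sub, sub_mul]
    congr 1
    rw [hcomm ((Polynomial.C (R := ℂ)).mapMatrix P), mul_assoc, ← map_mul, h1, map_one, mul_one]
  show (Matrix.charmatrix (P * A * Q)).det = (Matrix.charmatrix A).det
  rw [key, Matrix.det_mul, Matrix.det_mul, mul_right_comm,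
    ← Matrix.det_mul ((Polynomial.C (R := ℂ)).mapMatrix P) ((Polynomial.C (R := ℂ)).mapMatrix Q),
    ← map_mul ((Polynomial.C (R := ℂ)).mapMatrix) P Q, h1, map_one, Matrix.det_one, one_mul]

lemma exists_multiset (A : Matrix V V ℂ) (hA : A.IsHermitian) :
    ∃ s : Multiset ℂ, A.charpoly = (s.map fun a => X - Polynomial.C a).prod ∧
      ∀ k : ℕ, (A ^ k).trace = (s.map fun a => a ^ k).sum := by
  classical
  have hspec := hA.spectral_theorem
  set U : Matrix V V ℂ := (hA.eigenvectorUnitary : Matrix V V ℂ) with hUdef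
  set D : Matrix V V ℂ := Matrix.diagonal (RCLike.ofReal ∘ hA.eigenvalues) with hDdef
  have h1 : U * star U = 1 := Matrix.mem_unitaryGroup_iff.mp (hA.eigenvectorUnitary).2
  have h2 : star U * U = 1 := Matrix.mem_unitaryGroup_iff'.mp (hA.eigenvectorUnitary).2
  have hdiag : ∀ dd : V → ℂ, (Matrix.diagonal dd).charpoly = ∏ i : V, (X - Polynomial.C (dd i)) := by
    intro dd
    show (Matrix.charmatrix (Matrix.diagonal dd)).det = _
    have hcm : Matrix.charmatrix (Matrix.diagonal dd)
        = Matrix.diagonal (fun i => (X : ℂ[X]) - Polynomial.C (dd i)) := by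
      ext i j
      by_cases hij : i = j
      · subst hij
        rw [Matrix.charmatrix_apply_eq, Matrix.diagonal_apply_eq, Matrix.diagonal_apply_eq]
      · rw [Matrix.charmatrix_apply_ne _ _ _ hij, Matrix.diagonal_apply_ne _ hij,
          Matrix.diagonal_apply_ne _ hij, map_zero, neg_zero]
    rw [hcm, Matrix.det_diagonal]
  refine ⟨Finset.univ.val.map fun i => ((hA.eigenvalues i : ℝ) : ℂ), ?_, ?_⟩
  · have hchar : A.charpoly = D.charpoly := by
      conv_lhs => rw [hspec]
      exact charpoly_conj h1 h2
    rw [hchar, hDdef, hdiag, Multiset.map_map, Finset.prod_eq_multiset_prod]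
    rfl
  · intro k
    have hpow : ∀ m : ℕ, A ^ m = U * D ^ m * star U := by
      intro m
      induction m with
      | zero => rw [pow_zero, pow_zero, mul_one, h1]
      | succ m ih =>
        rw [pow_succ, ih]
        conv_lhs => rw [hspec]
        rw [pow_succ]
        rw [Unitary.conjStarAlgAut_apply, ← hUdef]
        simp only [mul_assoc]
        rw [show star U * (U * (D * star U)) = D * star U from by rw [← mul_assoc, h2, one_mul]]
    rw [hpow k, Matrix.trace_mul_comm, ← mul_assoc, h2, one_mul, hDdef, Matrix.diagonal_pow,
      Matrix.trace_diagonal, Multiset.map_map, Finset.sum_eq_multiset_sum]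
    rfl

lemma trace_pow_eq {A B : Matrix V V ℂ} (hA : A.IsHermitian) (hB : B.IsHermitian)
    (h : A.charpoly = B.charpoly) (k : ℕ) : (A ^ k).trace = (B ^ k).trace := by
  obtain ⟨s, hs1, hs2⟩ := exists_multiset A hA
  obtain ⟨t, ht1, ht2⟩ := exists_multiset B hB
  have hst : s = t := by
    have hroots := congrArg Polynomial.roots ((hs1.symm.trans h).trans ht1)
    rwa [Polynomial.roots_multiset_prod_X_sub_C, Polynomial.roots_multiset_prod_X_sub_C] at hroots
  rw [hs2, ht2, hst]

end Aux3
/-- a mixed multigraph is cospectral with its underlying graph iff every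
mixed cycle has weight `1`. -/
theorem cospectral_underlying_iff [Fintype V] [Fintype E] {G : Multigraph V E}
    (M : MixedOrientation G) :
    (herm M).charpoly = (herm G.triv).charpoly ↔
      ∀ C : MixedCycle G, cycleWeight M C = 1 := by
  constructor
  · intro hchar C
    have hk := trace_pow_eq (isHermitian_herm M) (isHermitian_herm G.triv) hchar C.n
    rw [trace_herm_pow, trace_herm_pow] at hk
    have hk2 : (∑ p : Fin (C.n+1) → V, ∑ e : Fin C.n → E,
        if (p (Fin.last C.n) = p 0 ∧ ∀ i : Fin C.n, G.ends (e i) = s(p i.castSucc, p i.succ))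
        then ∏ i : Fin C.n, stepW M (e i) (p i.castSucc) else 0)
        = ∑ p : Fin (C.n+1) → V, ∑ e : Fin C.n → E,
          if (p (Fin.last C.n) = p 0 ∧ ∀ i : Fin C.n, G.ends (e i) = s(p i.castSucc, p i.succ))
          then (1:ℂ) else 0 := by
      rw [hk]
      refine Finset.sum_congr rfl fun p _ => Finset.sum_congr rfl fun e _ => ?_
      split_ifs with h
      · simp [stepW_triv]
      · rfl
    have hnonneg : ∀ (p : Fin (C.n+1) → V) (e : Fin C.n → E), (0:ℝ) ≤
        (if (p (Fin.last C.n) = p 0 ∧ ∀ i : Fin C.n, G.ends (e i) = s(p i.castSucc, p i.succ))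
         then 1 - (∏ i : Fin C.n, stepW M (e i) (p i.castSucc)).re else 0) := by
      intro p e
      split_ifs with h
      · have hns : Complex.normSq (∏ i : Fin C.n, stepW M (e i) (p i.castSucc)) = 1 := by
          rw [map_prod]
          exact Finset.prod_eq_one fun i _ => normSq_stepW M _ _
        have := re_le_one_of_normSq hns
        linarith
      · exact le_refl 0
    have h0 : (∑ p : Fin (C.n+1) → V, ∑ e : Fin C.n → E,
        (if (p (Fin.last C.n) = p 0 ∧ ∀ i : Fin C.n, G.ends (e i) = s(p i.castSucc, p i.succ))
         then 1 - (∏ i : Fin C.n, stepW M (e i) (p i.castSucc)).re else 0)) = 0 := by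
      have hre := congrArg Complex.re hk2
      simp only [Complex.re_sum, apply_ite Complex.re, Complex.zero_re, Complex.one_re] at hre
      have hsplit : ∀ (p : Fin (C.n+1) → V) (e : Fin C.n → E),
          (if (p (Fin.last C.n) = p 0 ∧ ∀ i : Fin C.n, G.ends (e i) = s(p i.castSucc, p i.succ))
           then 1 - (∏ i : Fin C.n, stepW M (e i) (p i.castSucc)).re else 0)
          = (if (p (Fin.last C.n) = p 0 ∧ ∀ i : Fin C.n, G.ends (e i) = s(p i.castSucc, p i.succ))
             then (1:ℝ) else 0)
            - (if (p (Fin.last C.n) = p 0 ∧ ∀ i : Fin C.n, G.ends (e i) = s(p i.castSucc, p i.succ))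
               then (∏ i : Fin C.n, stepW M (e i) (p i.castSucc)).re else 0) := fun p e => by
        split_ifs <;> simp
      simp only [hsplit, Finset.sum_sub_distrib]
      rw [hre, sub_self]
    have key : ∀ (p : Fin (C.n+1) → V) (e : Fin C.n → E),
        (p (Fin.last C.n) = p 0 ∧ ∀ i : Fin C.n, G.ends (e i) = s(p i.castSucc, p i.succ)) →
        (∏ i : Fin C.n, stepW M (e i) (p i.castSucc)) = 1 := by
      intro p e hcond
      have houter := (Finset.sum_eq_zero_iff_of_nonneg
        (fun p' _ => Finset.sum_nonneg fun e' _ => hnonneg p' e')).mp h0 p (Finset.mem_univ p)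
      have hterm := (Finset.sum_eq_zero_iff_of_nonneg
        (fun e' _ => hnonneg p e')).mp houter e (Finset.mem_univ e)
      rw [if_pos hcond] at hterm
      have hns : Complex.normSq (∏ i : Fin C.n, stepW M (e i) (p i.castSucc)) = 1 := by
        rw [map_prod]
        exact Finset.prod_eq_one fun i _ => normSq_stepW M _ _
      exact eq_one_of_normSq_re hns (by linarith)
    have hc1 : (fun i : Fin (C.n+1) => C.vert ((i.val : ℕ) : ZMod C.n)) (Fin.last C.n)
        = (fun i : Fin (C.n+1) => C.vert ((i.val : ℕ) : ZMod C.n)) 0 := by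
      show C.vert (((Fin.last C.n).val : ℕ) : ZMod C.n)
        = C.vert (((0 : Fin (C.n+1)).val : ℕ) : ZMod C.n)
      rw [Fin.val_last, Fin.val_zero, Nat.cast_zero, ZMod.natCast_self]
    have hc2 : ∀ i : Fin C.n, G.ends ((fun i : Fin C.n => C.edge ((i.val : ℕ) : ZMod C.n)) i)
        = s((fun i : Fin (C.n+1) => C.vert ((i.val : ℕ) : ZMod C.n)) i.castSucc,
            (fun i : Fin (C.n+1) => C.vert ((i.val : ℕ) : ZMod C.n)) i.succ) := by
      intro i
      show G.ends (C.edge ((i.val : ℕ) : ZMod C.n))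
        = s(C.vert ((i.castSucc.val : ℕ) : ZMod C.n), C.vert ((i.succ.val : ℕ) : ZMod C.n))
      rw [Fin.coe_castSucc, Fin.val_succ, Nat.cast_add, Nat.cast_one]
      exact C.ends_eq _
    have hwt := key (fun i : Fin (C.n+1) => C.vert ((i.val : ℕ) : ZMod C.n))
      (fun i : Fin C.n => C.edge ((i.val : ℕ) : ZMod C.n)) ⟨hc1, hc2⟩
    rw [cycleWeight_eq_prod, ← Fin.prod_univ_eq_prod_range
      (fun t => stepW M (C.edge ((t : ℕ) : ZMod C.n)) (C.vert ((t : ℕ) : ZMod C.n))) C.n]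
    refine Eq.trans (Finset.prod_congr rfl fun i _ => ?_) hwt
    show stepW M (C.edge ((i.val : ℕ) : ZMod C.n)) (C.vert ((i.val : ℕ) : ZMod C.n))
      = stepW M (C.edge ((i.val : ℕ) : ZMod C.n)) (C.vert ((i.castSucc.val : ℕ) : ZMod C.n))
    rw [Fin.coe_castSucc]
  · intro H
    obtain ⟨d, hd0, hd⟩ := exists_potential M H
    have hM : herm M = Matrix.diagonal (fun v => (d v)⁻¹) * herm G.triv * Matrix.diagonal d := by
      ext u v
      rw [Matrix.mul_diagonal, Matrix.diagonal_mul, herm_apply, herm_apply,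
        Finset.mul_sum, Finset.sum_mul]
      refine Finset.sum_congr rfl fun e _ => ?_
      by_cases h : G.ends e = s(u, v)
      · rw [if_pos h, if_pos h, stepW_triv, mul_one]
        exact hd e u v h
      · rw [if_neg h, if_neg h, mul_zero, zero_mul]
    rw [hM]
    refine charpoly_conj ?_ ?_
    · rw [Matrix.diagonal_mul_diagonal,
        show (fun i => (d i)⁻¹ * d i) = fun _ => (1:ℂ) from funext fun v => inv_mul_cancel₀ (hd0 v)]
      exact Matrix.diagonal_one
    · rw [Matrix.diagonal_mul_diagonal,
        show (fun i => d i * (d i)⁻¹) = fun _ => (1:ℂ) from funext fun v => mul_inv_cancel₀ (hd0 v)]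
      exact Matrix.diagonal_one

end
end

section
/- If uv is a bridge of a mixed multigraph M (an edge whose removal disconnects its component), then the mixed multigraph obtained from M by changing the orientation status of uv (reversing it, orienting it, or making it undirected) has the same spectrum as M. -/
open Complex Finset

noncomputable section

variable {V E : Type}

variable [DecidableEq V]

lemma charpoly_conj_aux {n R : Type} [Fintype n] [DecidableEq n] [CommRing R]
    (A P Q : Matrix n n R) (hPQ : P * Q = 1) :
    (P * A * Q).charpoly = A.charpoly := by
  have hmapPQ : P.map (Polynomial.C : R →+* Polynomial R) * Q.map Polynomial.C = 1 := by
    rw [← Matrix.map_mul, hPQ, Matrix.map_one _ (map_zero _) (map_one _)]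
  have hmat : Matrix.charmatrix (P * A * Q) =
      P.map Polynomial.C * Matrix.charmatrix A * Q.map Polynomial.C := by
    unfold Matrix.charmatrix
    have hcomm : Commute (Matrix.scalar n (Polynomial.X : Polynomial R)) (P.map Polynomial.C) :=
      Matrix.scalar_commute _ (fun r => Commute.all _ r) _
    have h1 : P.map Polynomial.C * Matrix.scalar n (Polynomial.X : Polynomial R)
        * Q.map Polynomial.C = Matrix.scalar n Polynomial.X := by
      rw [← hcomm.eq, mul_assoc, hmapPQ, mul_one]
    have h2 : (Polynomial.C : R →+* Polynomial R).mapMatrix (P * A * Q) =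
        P.map Polynomial.C * (Polynomial.C : R →+* Polynomial R).mapMatrix A
          * Q.map Polynomial.C := by
      simp only [RingHom.mapMatrix_apply, Matrix.map_mul]
    rw [mul_sub, sub_mul, h1, h2]
  unfold Matrix.charpoly
  rw [hmat, Matrix.det_mul, Matrix.det_mul, mul_comm ((P.map Polynomial.C).det) _,
    mul_assoc, ← Matrix.det_mul, hmapPQ, Matrix.det_one, mul_one]

lemma reachIn_symm {G : Multigraph V E} {S : Set E} {u v : V}
    (h : ReachIn G S u v) : ReachIn G S v u := by
  have hs : Symmetric (fun x y : V => ∃ e ∈ S, G.ends e = s(x, y)) := by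
    rintro x y ⟨e, he, hxy⟩
    exact ⟨e, he, by rw [hxy, Sym2.eq_swap]⟩
  haveI : Std.Symm (fun x y : V => ∃ e ∈ S, G.ends e = s(x, y)) := ⟨hs⟩
  exact Relation.ReflTransGen.stdSymm.symm _ _ h

lemma omega6_mul_conj : omega6 * (starRingEnd ℂ) omega6 = 1 := by
  have h3 : Real.sqrt 3 * Real.sqrt 3 = 3 := Real.mul_self_sqrt (by norm_num)
  rw [Complex.mul_conj]
  have : Complex.normSq omega6 = 1 := by
    simp only [omega6, Complex.normSq_mk]
    nlinarith [h3]
  rw [this, Complex.ofReal_one]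

lemma stepWeight_mul_conj {G : Multigraph V E} (M : MixedOrientation G) (e : E) (u v : V) :
    stepWeight M e u v * (starRingEnd ℂ) (stepWeight M e u v) = 1 := by
  unfold stepWeight
  rcases M.orient e with _ | ⟨a, b⟩
  · simp
  · by_cases h : a = u <;> simp [h]
    · exact omega6_mul_conj
    · rw [mul_comm]; exact omega6_mul_conj

lemma stepWeight_congr {G : Multigraph V E} (M M' : MixedOrientation G) (e : E) (u v : V)
    (h : M.orient e = M'.orient e) : stepWeight M e u v = stepWeight M' e u v := by
  unfold stepWeight; rw [h]

lemma stepWeight_swap {G : Multigraph V E} (M : MixedOrientation G) (e : E) (u v : V)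
    (hend : G.ends e = s(u, v)) (huv : u ≠ v) :
    stepWeight M e v u = (starRingEnd ℂ) (stepWeight M e u v) := by
  unfold stepWeight
  rcases ho : M.orient e with _ | ⟨a, b⟩
  · simp
  · have hab := M.compat e a b ho
    rw [hend] at hab
    rcases Sym2.eq_iff.mp hab.symm with ⟨ha, hb⟩ | ⟨ha, hb⟩
    · subst ha; simp [huv]
    · subst ha; simp [Ne.symm huv]

/-- changing the orientation status of a bridge does not change the spectrum. -/
theorem bridge_spectrum_invariant [Fintype V] [Fintype E] {G : Multigraph V E}
    (e₀ : E)
    (hbridge : ∀ u v : V, G.ends e₀ = s(u, v) → ¬ ReachIn G {e : E | e ≠ e₀} u v)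
    (M M' : MixedOrientation G)
    (hsame : ∀ e : E, e ≠ e₀ → M.orient e = M'.orient e) :
    (herm M).charpoly = (herm M').charpoly := by
  classical
  obtain ⟨⟨u, v⟩, huv0⟩ := Quot.exists_rep (G.ends e₀)
  have huv : G.ends e₀ = s(u, v) := huv0.symm
  have hne : u ≠ v := by
    have := G.loopless e₀
    rw [huv] at this
    exact fun h => this (Sym2.mk_isDiag_iff.mpr h)
  have honly : ∀ e : E, G.ends e = s(u, v) → e = e₀ := by
    intro e he
    by_contra hne'
    exact hbridge u v huv (Relation.ReflTransGen.single ⟨e, hne', he⟩)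
  set c : ℂ := stepWeight M' e₀ u v * (starRingEnd ℂ) (stepWeight M e₀ u v) with hcdef
  have hc : stepWeight M e₀ u v * c = stepWeight M' e₀ u v := by
    rw [hcdef, show stepWeight M e₀ u v * (stepWeight M' e₀ u v *
      (starRingEnd ℂ) (stepWeight M e₀ u v)) = stepWeight M' e₀ u v *
      (stepWeight M e₀ u v * (starRingEnd ℂ) (stepWeight M e₀ u v)) by ring,
      stepWeight_mul_conj, mul_one]
  have hcc : (starRingEnd ℂ) c * c = 1 := by
    have h1 := stepWeight_mul_conj M e₀ u v
    have h2 := stepWeight_mul_conj M' e₀ u v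
    rw [hcdef, map_mul, Complex.conj_conj]
    calc (starRingEnd ℂ) (stepWeight M' e₀ u v) * stepWeight M e₀ u v *
        (stepWeight M' e₀ u v * (starRingEnd ℂ) (stepWeight M e₀ u v))
        = (stepWeight M' e₀ u v * (starRingEnd ℂ) (stepWeight M' e₀ u v)) *
          (stepWeight M e₀ u v * (starRingEnd ℂ) (stepWeight M e₀ u v)) := by ring
      _ = 1 := by rw [h1, h2, mul_one]
  set d : V → ℂ := fun x => if ReachIn G {e : E | e ≠ e₀} v x then c else 1 with hddef
  have hd : ∀ x, (starRingEnd ℂ) (d x) * d x = 1 := by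
    intro x
    show (starRingEnd ℂ) (if ReachIn G {e : E | e ≠ e₀} v x then c else 1) *
      (if ReachIn G {e : E | e ≠ e₀} v x then c else 1) = 1
    by_cases h : ReachIn G {e : E | e ≠ e₀} v x
    · rw [if_pos h]; exact hcc
    · rw [if_neg h]; simp
  have hdu : d u = 1 := by
    show (if ReachIn G {e : E | e ≠ e₀} v u then c else 1) = 1
    rw [if_neg]
    intro h
    exact hbridge u v huv (reachIn_symm h)
  have hdv : d v = c := by
    show (if ReachIn G {e : E | e ≠ e₀} v v then c else 1) = c
    exact if_pos Relation.ReflTransGen.refl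
  have hsum : ∀ (N : MixedOrientation G) (a b : V), s(a, b) = s(u, v) →
      (∑ e : E, if G.ends e = s(a, b) then stepWeight N e a b else 0)
        = stepWeight N e₀ a b := by
    intro N a b hab
    rw [Finset.sum_eq_single e₀]
    · rw [if_pos (by rw [huv, ← hab])]
    · intro e _ hne'
      rw [if_neg]
      intro h
      rw [hab] at h
      exact hne' (honly e h)
    · intro h
      exact absurd (Finset.mem_univ e₀) h
  have hkey : herm M' = (Matrix.diagonal fun x => (starRingEnd ℂ) (d x)) * herm M
      * Matrix.diagonal d := by
    ext x y
    rw [Matrix.mul_diagonal, Matrix.diagonal_mul]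
    by_cases hxy : s(x, y) = s(u, v)
    · rcases Sym2.eq_iff.mp hxy with ⟨hx, hy⟩ | ⟨hx, hy⟩
      · subst hx; subst hy
        show (∑ e : E, if G.ends e = s(x, y) then stepWeight M' e x y else 0)
          = _ * (∑ e : E, if G.ends e = s(x, y) then stepWeight M e x y else 0) * _
        rw [hsum M' x y hxy, hsum M x y hxy, hdu, hdv, map_one, one_mul]
        exact hc.symm
      · subst hx; subst hy
        show (∑ e : E, if G.ends e = s(x, y) then stepWeight M' e x y else 0)
          = _ * (∑ e : E, if G.ends e = s(x, y) then stepWeight M e x y else 0) * _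
        rw [hsum M' x y hxy, hsum M x y hxy, hdu, hdv, mul_one]
        have hyx : G.ends e₀ = s(y, x) := huv
        rw [stepWeight_swap M' e₀ y x hyx hne, stepWeight_swap M e₀ y x hyx hne,
          ← hc, map_mul]
        exact mul_comm _ _
    · have hA : (herm M' : Matrix V V ℂ) x y = herm M x y := by
        show (∑ e : E, if G.ends e = s(x, y) then stepWeight M' e x y else 0)
          = (∑ e : E, if G.ends e = s(x, y) then stepWeight M e x y else 0)
        refine Finset.sum_congr rfl fun e _ => ?_
        by_cases he : G.ends e = s(x, y)
        · have hee : e ≠ e₀ := fun h => hxy (by rw [← he, h, huv])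
          rw [if_pos he, if_pos he, stepWeight_congr M M' e x y (hsame e hee)]
        · rw [if_neg he, if_neg he]
      show (herm M' : Matrix V V ℂ) x y = _ * (herm M) x y * _
      rw [hA]
      by_cases hex : ∃ e : E, G.ends e = s(x, y)
      · obtain ⟨e, he⟩ := hex
        have hee : e ≠ e₀ := fun h => hxy (by rw [← he, h, huv])
        have hdxy : d x = d y := by
          show (if ReachIn G {e : E | e ≠ e₀} v x then c else 1)
            = (if ReachIn G {e : E | e ≠ e₀} v y then c else 1)
          by_cases hx : ReachIn G {e : E | e ≠ e₀} v x
          · rw [if_pos hx, if_pos (show ReachIn G {e : E | e ≠ e₀} v y from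
              hx.tail ⟨e, hee, he⟩)]
          · rw [if_neg hx, if_neg (show ¬ ReachIn G {e : E | e ≠ e₀} v y from
              fun h => hx (h.tail ⟨e, hee, by rw [he, Sym2.eq_swap]⟩))]
        rw [hdxy, mul_comm ((starRingEnd ℂ) (d y)) (herm M x y), mul_assoc, hd, mul_one]
      · push_neg at hex
        have h0 : (herm M : Matrix V V ℂ) x y = 0 := by
          show (∑ e : E, if G.ends e = s(x, y) then stepWeight M e x y else 0) = 0
          exact Finset.sum_eq_zero fun e _ => if_neg (hex e)
        rw [h0, mul_zero, zero_mul]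
  have hPQ : Matrix.diagonal d * (Matrix.diagonal fun x => (starRingEnd ℂ) (d x)) = 1 := by
    have h1 : (fun i => d i * (starRingEnd ℂ) (d i)) = fun _ : V => (1 : ℂ) :=
      funext fun x => by rw [mul_comm]; exact hd x
    rw [Matrix.diagonal_mul_diagonal, h1, Matrix.diagonal_one]
  have hQP : (Matrix.diagonal fun x => (starRingEnd ℂ) (d x)) * Matrix.diagonal d = 1 := by
    have h1 : (fun i => (starRingEnd ℂ) (d i) * d i) = fun _ : V => (1 : ℂ) :=
      funext fun x => hd x
    rw [Matrix.diagonal_mul_diagonal, h1, Matrix.diagonal_one]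
  rw [hkey]
  exact (charpoly_conj_aux (herm M) _ _ hQP).symm

end
end

section
/- Let M be a mixed multigraph with an admissible partition V(M) = V_1 ∪ V_ω ∪ V_{ω²} ∪ V_{ω³} ∪ V_{ω⁴} ∪ V_{ω⁵} (meaning: for each j ∈ {ω^i : 0 ≤ i ≤ 5}, there are no arcs from V_j to V_{ωj}; there are no edges at all between V_j and V_{ω³j}; and all edges between V_j and V_{ω⁴j} are arcs directed from V_j to V_{ω⁴j}). Let M' be obtained from M by the three-way switching with respect to this partition: replace each undirected edge between V_j and V_{ωj} by an arc from V_j to V_{ωj}; replace each arc from V_j to V_{ω⁵j} by an undirected edge; and reverse all arcs from V_j to V_{ω⁴j}. Then M' is cospectral with M. -/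
open Complex Finset

noncomputable section

variable {V E : Type}

variable [DecidableEq V]

-- AUXILIARY LEMMAS --------------------------------------------------------

lemma omega6_sq : omega6 ^ 2 = omega6 - 1 := by
  have h3 : Real.sqrt 3 * Real.sqrt 3 = 3 := Real.mul_self_sqrt (by norm_num)
  apply Complex.ext <;>
    simp [omega6, pow_two, Complex.mul_re, Complex.mul_im] <;> nlinarith [h3]

lemma omega6_im_ne : omega6.im ≠ 0 := by
  have : (0:ℝ) < Real.sqrt 3 := Real.sqrt_pos.mpr (by norm_num)
  simp only [omega6]
  positivity

lemma omega6_conj : (starRingEnd ℂ) omega6 = 1 - omega6 := by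
  apply Complex.ext <;> simp [omega6] <;> norm_num

lemma omega6_cube : omega6 ^ 3 = -1 := by
  linear_combination (omega6 + 1) * omega6_sq

lemma omega6_six : omega6 ^ 6 = 1 := by
  linear_combination (omega6 ^ 3 - 1) * omega6_cube

lemma omega6_ne_zero : omega6 ≠ 0 := by
  intro h
  have := omega6_six
  rw [h] at this
  simp at this

lemma omega6_pow5 : omega6 ^ 5 = 1 - omega6 := by
  linear_combination omega6 ^ 2 * omega6_cube - omega6_sq

lemma omega6_conj_eq : (starRingEnd ℂ) omega6 = omega6 ^ 5 := by
  rw [omega6_conj, omega6_pow5]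

lemma omega6_pow_ne_one : ∀ d, 1 ≤ d → d ≤ 5 → omega6 ^ d ≠ 1 := by
  intro d h1 h5 h
  interval_cases d
  · have h2 : omega6 = 1 := by simpa using h
    exact omega6_im_ne (by simpa using congrArg Complex.im h2)
  · have h2 : omega6 = 2 := by linear_combination h - omega6_sq
    exact omega6_im_ne (by simpa using congrArg Complex.im h2)
  · rw [omega6_cube] at h; norm_num at h
  · have h2 : omega6 = -1 := by linear_combination omega6 * omega6_cube - h
    exact omega6_im_ne (by simpa using congrArg Complex.im h2)
  · have h2 : omega6 = 0 := by
      linear_combination omega6 ^ 2 * omega6_cube - h - omega6_sq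
    exact omega6_ne_zero h2

lemma omega6_pow_inj {a b : ℕ} (ha : a ≤ 5) (hb : b ≤ 5)
    (h : omega6 ^ a = omega6 ^ b) : a = b := by
  wlog hab : a ≤ b generalizing a b
  · exact (this hb ha h.symm (by omega)).symm
  have h2 : omega6 ^ a * omega6 ^ (b - a) = omega6 ^ a * 1 := by
    rw [mul_one, ← pow_add]; rw [h]; congr 1; omega
  have h3 : omega6 ^ (b - a) = 1 :=
    mul_left_cancel₀ (pow_ne_zero _ omega6_ne_zero) h2
  by_contra hne
  exact omega6_pow_ne_one (b - a) (by omega) (by omega) h3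

lemma omega6_pow_mod (a : ℕ) : omega6 ^ a = omega6 ^ (a % 6) := by
  conv_lhs => rw [show a = 6 * (a / 6) + a % 6 by omega]
  rw [pow_add, pow_mul, omega6_six, one_pow, one_mul]

lemma omega6_ratio_exists {i j : ℕ} (hi : i ≤ 5) (hj : j ≤ 5) :
    ∃ k ≤ 5, omega6 ^ j = omega6 ^ k * omega6 ^ i ∧
      ∀ m ≤ 5, omega6 ^ j = omega6 ^ m * omega6 ^ i → m = k := by
  refine ⟨(j + 6 - i) % 6, by omega, ?_, ?_⟩
  · rw [← pow_add, omega6_pow_mod (_ + i)]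
    congr 1; omega
  · intro m hm h
    have h2 : omega6 ^ (m + i) = omega6 ^ j := by rw [pow_add, ← h]
    rw [omega6_pow_mod (m + i)] at h2
    have := omega6_pow_inj (a := (m + i) % 6) (by omega) hj h2
    omega

/-- Theorem COS: a three-way switching with respect to an admissible
partition `V = V_1 ∪ V_ω ∪ V_{ω²} ∪ V_{ω³} ∪ V_{ω⁴} ∪ V_{ω⁵}` (encoded by the function
`p : V → ℂ` with values in the sixth roots of unity, `V_j = p⁻¹(j)`) yields a cospectral
mixed multigraph. -/
theorem admissible_switching_cospectral [Fintype V] [Fintype E] {G : Multigraph V E}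
    (M M' : MixedOrientation G) (p : V → ℂ) (hp : IsSixthRoots p)
    -- admissibility of the partition:
    -- (1) no arcs from `V_j` to `V_{ωj}`
    (adm1 : ∀ e u v, M.orient e = some (u, v) → p v ≠ omega6 * p u)
    -- (2) no edges at all between `V_j` and `V_{ω³j}`
    (adm2 : ∀ e u v, G.ends e = s(u, v) → p v ≠ omega6 ^ 3 * p u)
    -- (3) all edges between `V_j` and `V_{ω⁴j}` are arcs from `V_j` to `V_{ω⁴j}`
    (adm3 : ∀ e u v, G.ends e = s(u, v) → p v = omega6 ^ 4 * p u →
      M.orient e = some (u, v))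
    -- `M'` is obtained from `M` by the three-way switching w.r.t. the partition:
    -- undirected edges between `V_j` and `V_{ωj}` become arcs from `V_j` to `V_{ωj}`
    (h1 : ∀ e u v, G.ends e = s(u, v) → M.orient e = none → p v = omega6 * p u →
      M'.orient e = some (u, v))
    -- all other undirected edges stay undirected
    (h2 : ∀ e u v, G.ends e = s(u, v) → M.orient e = none →
      p v ≠ omega6 * p u → p u ≠ omega6 * p v → M'.orient e = none)
    -- arcs from `V_j` to `V_{ω⁵j}` become undirected edges
    (h3 : ∀ e u v, M.orient e = some (u, v) → p v = omega6 ^ 5 * p u →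
      M'.orient e = none)
    -- arcs from `V_j` to `V_{ω⁴j}` are reversed
    (h4 : ∀ e u v, M.orient e = some (u, v) → p v = omega6 ^ 4 * p u →
      M'.orient e = some (v, u))
    -- all other arcs are unchanged
    (h5 : ∀ e u v, M.orient e = some (u, v) → p v ≠ omega6 ^ 5 * p u →
      p v ≠ omega6 ^ 4 * p u → M'.orient e = some (u, v)) :
    (herm M').charpoly = (herm M).charpoly := by

  classical
  -- every value of p is nonzero
  have hpne : ∀ w, p w ≠ 0 := by
    intro w
    obtain ⟨i, _, hw⟩ := hp w
    rw [hw]; exact pow_ne_zero _ omega6_ne_zero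
  -- the key entrywise identity
  have key : ∀ u v : V, p u * herm M' u v = herm M u v * p v := by
    intro u v
    simp only [herm, Matrix.of_apply]
    rw [Finset.mul_sum, Finset.sum_mul]
    refine Finset.sum_congr rfl fun e _ => ?_
    by_cases hends : G.ends e = s(u, v)
    · rw [if_pos hends, if_pos hends]
      have huv : u ≠ v := by
        intro h
        exact G.loopless e (by rw [hends, h]; simp)
      have hends' : G.ends e = s(v, u) := by rw [hends, Sym2.eq_swap]
      obtain ⟨i, hi, hpu⟩ := hp u
      obtain ⟨j, hj, hpv⟩ := hp v
      obtain ⟨k, hk5, hkraw, huniq⟩ := omega6_ratio_exists hi hj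
      have hk : p v = omega6 ^ k * p u := by rw [hpu, hpv]; exact hkraw
      have uniq : ∀ m, m ≤ 5 → p v = omega6 ^ m * p u → m = k := by
        intro m hm h
        exact huniq m hm (by rw [← hpu, ← hpv]; exact h)
      have swap_to : ∀ m, 1 ≤ m → m ≤ 5 → p u = omega6 ^ m * p v → 6 - m = k := by
        intro m h1 h5' h
        refine uniq (6 - m) (by omega) ?_
        have h6 : omega6 ^ (6 - m) * omega6 ^ m = 1 := by
          rw [← pow_add, show 6 - m + m = 6 by omega]; exact omega6_six
        calc p v = omega6 ^ (6 - m) * omega6 ^ m * p v := by rw [h6, one_mul]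
          _ = omega6 ^ (6 - m) * p u := by rw [mul_assoc, ← h]
      rcases ho : M.orient e with _ | ⟨a, b⟩
      -- e is unoriented in M
      · interval_cases k
        · -- k = 0 : edge stays unoriented
          have hne1 : p v ≠ omega6 * p u := by
            intro h
            have := uniq 1 (by norm_num) (by rw [pow_one] at *; exact h)
            omega
          have hne1' : p u ≠ omega6 * p v := by
            intro h
            have := swap_to 1 (by norm_num) (by norm_num) (by rw [pow_one]; exact h)
            omega
          have hM' := h2 e u v hends ho hne1 hne1'
          simp only [stepWeight, ho, hM']
          linear_combination -hk
        · -- k = 1 : edge becomes an arc u → v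
          have hM' := h1 e u v hends ho (by rw [pow_one] at hk; exact hk)
          simp only [stepWeight, ho, hM']
          try rw [if_pos rfl]
          try rw [if_pos trivial]
          linear_combination -hk
        · -- k = 2 : impossible
          have hswap : p u = omega6 ^ 4 * p v := by
            linear_combination -omega6 ^ 4 * hk - p u * omega6_six
          have := adm3 e v u hends' hswap
          rw [ho] at this
          exact absurd this.symm (Option.some_ne_none _)
        · -- k = 3 : impossible
          exact absurd hk (adm2 e u v hends)
        · -- k = 4 : impossible
          have := adm3 e u v hends hk
          rw [ho] at this
          exact absurd this.symm (Option.some_ne_none _)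
        · -- k = 5 : edge becomes an arc v → u
          have hswap : p u = omega6 * p v := by
            linear_combination -omega6 * hk - p u * omega6_six
          have hM' := h1 e v u hends' ho hswap
          simp only [stepWeight, ho, hM']
          rw [if_neg (Ne.symm huv), omega6_conj_eq]
          linear_combination -hk
      -- e is an arc in M
      · have hab := M.compat e a b ho
        rcases Sym2.eq_iff.mp (hab.symm.trans hends) with ⟨ha, hb⟩ | ⟨ha, hb⟩
        -- arc u → v
        · rw [ha, hb] at ho
          interval_cases k
          · -- k = 0 : arc unchanged
            have hne5 : p v ≠ omega6 ^ 5 * p u := by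
              intro h; have := uniq 5 (by norm_num) h; omega
            have hne4 : p v ≠ omega6 ^ 4 * p u := by
              intro h; have := uniq 4 (by norm_num) h; omega
            have hM' := h5 e u v ho hne5 hne4
            simp only [stepWeight, ho, hM']
            try rw [if_pos rfl]
            try rw [if_pos trivial]
            linear_combination -omega6 * hk
          · -- k = 1 : impossible (adm1)
            exact absurd (by rw [pow_one] at hk; exact hk) (adm1 e u v ho)
          · -- k = 2 : impossible
            have hswap : p u = omega6 ^ 4 * p v := by
              linear_combination -omega6 ^ 4 * hk - p u * omega6_six
            have h' := adm3 e v u hends' hswap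
            rw [ho] at h'
            exact absurd (by simpa using h' : u = v ∧ v = u).1 huv
          · -- k = 3 : impossible
            exact absurd hk (adm2 e u v hends)
          · -- k = 4 : arc reversed
            have hM' := h4 e u v ho hk
            simp only [stepWeight, ho, hM']
            try rw [if_pos rfl]
            try rw [if_pos trivial]
            rw [if_neg (Ne.symm huv)]
            rw [omega6_conj_eq]
            linear_combination -omega6 * hk
          · -- k = 5 : arc becomes unoriented
            have hM' := h3 e u v ho hk
            simp only [stepWeight, ho, hM']
            try rw [if_pos rfl]
            try rw [if_pos trivial]
            linear_combination -omega6 * hk - p u * omega6_six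
        -- arc v → u
        · rw [ha, hb] at ho
          interval_cases k
          · -- k = 0 : arc unchanged
            have hne5 : p u ≠ omega6 ^ 5 * p v := by
              intro h
              have := swap_to 5 (by norm_num) (by norm_num) h
              omega
            have hne4 : p u ≠ omega6 ^ 4 * p v := by
              intro h
              have := swap_to 4 (by norm_num) (by norm_num) h
              omega
            have hM' := h5 e v u ho hne5 hne4
            simp only [stepWeight, ho, hM']
            rw [if_neg (Ne.symm huv)]
            linear_combination -((starRingEnd ℂ) omega6) * hk
          · -- k = 1 : arc becomes unoriented
            have hswap : p u = omega6 ^ 5 * p v := by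
              linear_combination -omega6 ^ 5 * hk - p u * omega6_six
            have hM' := h3 e v u ho hswap
            simp only [stepWeight, ho, hM']
            rw [if_neg (Ne.symm huv)]
            rw [omega6_conj_eq]
            linear_combination -omega6 ^ 5 * hk - p u * omega6_six
          · -- k = 2 : arc reversed
            have hswap : p u = omega6 ^ 4 * p v := by
              linear_combination -omega6 ^ 4 * hk - p u * omega6_six
            have hM' := h4 e v u ho hswap
            simp only [stepWeight, ho, hM']
            rw [if_neg (Ne.symm huv)]
            try rw [if_pos rfl]
            try rw [if_pos trivial]
            rw [omega6_conj_eq]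
            linear_combination -omega6 ^ 5 * hk - omega6 * p u * omega6_six
          · -- k = 3 : impossible
            exact absurd hk (adm2 e u v hends)
          · -- k = 4 : impossible
            have h' := adm3 e u v hends hk
            rw [ho] at h'
            exact absurd (by simpa using h' : v = u ∧ u = v).2 huv
          · -- k = 5 : impossible (adm1)
            have hswap : p u = omega6 * p v := by
              linear_combination -omega6 * hk - p u * omega6_six
            exact absurd hswap (adm1 e v u ho)
    · simp [hends]
  -- transfer to characteristic polynomials via conjugation by diagonal p
  set D : Matrix V V (Polynomial ℂ) := Matrix.diagonal fun w => Polynomial.C (p w) with hD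
  have hmat : D * (herm M').charmatrix = (herm M).charmatrix * D := by
    refine Matrix.ext fun u v => ?_
    rw [Matrix.diagonal_mul, Matrix.mul_diagonal]
    by_cases h : u = v
    · subst h
      rw [Matrix.charmatrix_apply_eq, Matrix.charmatrix_apply_eq]
      have hC := congrArg Polynomial.C (key u u)
      rw [map_mul, map_mul] at hC
      linear_combination -hC
    · rw [Matrix.charmatrix_apply_ne _ _ _ h, Matrix.charmatrix_apply_ne _ _ _ h]
      have hC := congrArg Polynomial.C (key u v)
      rw [map_mul, map_mul] at hC
      linear_combination -hC
  have hdet : D.det ≠ 0 := by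
    rw [hD, Matrix.det_diagonal]
    exact Finset.prod_ne_zero_iff.mpr fun w _ => by
      simpa using hpne w
  have hdet2 : D.det * (herm M').charmatrix.det = (herm M).charmatrix.det * D.det := by
    rw [← Matrix.det_mul, ← Matrix.det_mul, hmat]
  apply mul_left_cancel₀ hdet
  rw [Matrix.charpoly, Matrix.charpoly, hdet2, mul_comm]


end
end
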